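/- arXiv:math/0605023 — 4 statements merged into one kernel-verified Lean document; each statement's English description precedes it below -/
import Mathlib

section
/- With A = -∂_r + (k/r)cos(I) and A* = ∂_r + 1/r + (k/r)cos(I), where I(r)=2 arctan(r^k), one has for every twice differentiable ψ : (0,∞) → ℝ: (A*(Aψ))(r) = -ψ''(r) - ψ'(r)/r + (k²/r²)·cos(2I(r))·ψ(r). -/
open Real Set

/-- Factorization `H = A* A` of the linearized Hamiltonian: for twice differentiable `ψ`,
`A*(Aψ) = -ψ'' - ψ'/r + (k²/r²) cos(2I) ψ` on `(0,∞)`. -/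
theorem hamiltonian_factorization (k : ℕ) (hk : 1 ≤ k)
    (I : ℝ → ℝ) (hI : ∀ r : ℝ, I r = 2 * Real.arctan (r ^ k))
    (A Astar : (ℝ → ℝ) → (ℝ → ℝ))
    (hA : ∀ ψ : ℝ → ℝ, ∀ r : ℝ,
      A ψ r = -deriv ψ r + ((k : ℝ) / r) * Real.cos (I r) * ψ r)
    (hAstar : ∀ ψ : ℝ → ℝ, ∀ r : ℝ,
      Astar ψ r = deriv ψ r + ψ r / r + ((k : ℝ) / r) * Real.cos (I r) * ψ r)
    (ψ : ℝ → ℝ) (hψ : Differentiable ℝ ψ) (hψ' : Differentiable ℝ (deriv ψ)) :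
    ∀ r : ℝ, 0 < r →
      Astar (A ψ) r
        = -deriv (deriv ψ) r - deriv ψ r / r
          + ((k : ℝ) ^ 2 / r ^ 2) * Real.cos (2 * I r) * ψ r := by
  intro r hr
  have hr0 : r ≠ 0 := ne_of_gt hr
  have hIfun : I = fun x : ℝ => 2 * Real.arctan (x ^ k) := funext hI
  have hpow : r ^ (k - 1) * r = r ^ k := by
    rw [← pow_succ, Nat.sub_add_cancel hk]
  have hposs : (0:ℝ) < 1 + (r ^ k) ^ 2 := by positivity
  have hs : Real.sqrt (1 + (r ^ k) ^ 2) * Real.sqrt (1 + (r ^ k) ^ 2)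
      = 1 + (r ^ k) ^ 2 := Real.mul_self_sqrt hposs.le
  have hsqrtne : Real.sqrt (1 + (r ^ k) ^ 2) ≠ 0 := by positivity
  have hsinI : Real.sin (I r) = 2 * r ^ k / (1 + (r ^ k) ^ 2) := by
    rw [hI, Real.sin_two_mul, Real.sin_arctan, Real.cos_arctan]
    rw [mul_one_div, ← mul_div_assoc, div_div, hs]
  -- derivative of I
  have hderivI : HasDerivAt I ((k : ℝ) * Real.sin (I r) / r) r := by
    have h1 : HasDerivAt (fun x : ℝ => x ^ k) ((k : ℝ) * r ^ (k - 1)) r := by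
      simpa using hasDerivAt_pow k r
    have h2 : HasDerivAt (fun x : ℝ => 2 * Real.arctan (x ^ k))
        (2 * ((1 / (1 + (r ^ k) ^ 2)) * ((k : ℝ) * r ^ (k - 1)))) r := by
      have := (Real.hasDerivAt_arctan (r ^ k)).comp r h1
      exact (this.const_mul 2).congr_deriv (by ring)
    rw [hIfun]
    convert h2 using 1
    show (k : ℝ) * Real.sin (2 * Real.arctan (r ^ k)) / r = _
    rw [← hI r, hsinI]
    field_simp
    linear_combination (-1 : ℝ) * hpow
  -- derivative of cos ∘ I
  have hcosI : HasDerivAt (fun x => Real.cos (I x))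
      (-Real.sin (I r) * ((k : ℝ) * Real.sin (I r) / r)) r :=
    (Real.hasDerivAt_cos (I r)).comp r hderivI
  -- derivative of k/x
  have hkr : HasDerivAt (fun x : ℝ => (k : ℝ) / x) (-(k : ℝ) / r ^ 2) r := by
    have := (hasDerivAt_inv hr0).const_mul (k : ℝ)
    simpa [div_eq_mul_inv, neg_div, mul_comm, mul_div_assoc] using this
  -- derivative of A ψ
  have hψd : HasDerivAt ψ (deriv ψ r) r := (hψ r).hasDerivAt
  have hψ'd : HasDerivAt (deriv ψ) (deriv (deriv ψ) r) r := (hψ' r).hasDerivAt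
  have hg : HasDerivAt (fun x => ((k : ℝ) / x) * Real.cos (I x) * ψ x)
      (((-(k : ℝ) / r ^ 2) * Real.cos (I r)
          + ((k : ℝ) / r) * (-Real.sin (I r) * ((k : ℝ) * Real.sin (I r) / r))) * ψ r
        + ((k : ℝ) / r) * Real.cos (I r) * deriv ψ r) r :=
    (hkr.mul hcosI).mul hψd
  have hAd : HasDerivAt (A ψ)
      (-deriv (deriv ψ) r
        + (((-(k : ℝ) / r ^ 2) * Real.cos (I r)
            + ((k : ℝ) / r) * (-Real.sin (I r) * ((k : ℝ) * Real.sin (I r) / r))) * ψ r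
          + ((k : ℝ) / r) * Real.cos (I r) * deriv ψ r)) r := by
    have : A ψ = fun x => -deriv ψ x + ((k : ℝ) / x) * Real.cos (I x) * ψ x :=
      funext (hA ψ)
    rw [this]
    exact hψ'd.neg.add hg
  have hderivA : deriv (A ψ) r
      = -deriv (deriv ψ) r
        + (((-(k : ℝ) / r ^ 2) * Real.cos (I r)
            + ((k : ℝ) / r) * (-Real.sin (I r) * ((k : ℝ) * Real.sin (I r) / r))) * ψ r
          + ((k : ℝ) / r) * Real.cos (I r) * deriv ψ r) := hAd.deriv
  have hcos2 : Real.cos (2 * I r) = Real.cos (I r) ^ 2 - Real.sin (I r) ^ 2 := by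
    rw [Real.cos_two_mul]
    nlinarith [Real.sin_sq_add_cos_sq (I r)]
  rw [hAstar, hderivA, hA, hcos2]
  field_simp
  ring
end

section
/- The potential V(r) = (k²+1)/r² + (2k/r²)·cos(I(r)) is space-repulsive: -V'(r) = 2(k²+1)/r³ + (4k/r³)cos(I(r)) + (2k²/r³)sin²(I(r)) ≥ 2(k-1)²/r³ for all r > 0. -/
open Real Set

/-- Space-repulsivity of the conjugated potential:
`-V'(r) = 2(k²+1)/r³ + (4k/r³) cos(I r) + (2k²/r³) sin²(I r) ≥ 2(k-1)²/r³` for all `r > 0`. -/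
theorem potential_space_repulsive (k : ℕ) (hk : 1 ≤ k)
    (I V : ℝ → ℝ) (hI : ∀ r : ℝ, I r = 2 * Real.arctan (r ^ k))
    (hV : ∀ r : ℝ, V r = ((k : ℝ) ^ 2 + 1) / r ^ 2 + (2 * (k : ℝ) / r ^ 2) * Real.cos (I r)) :
    ∀ r : ℝ, 0 < r →
      -deriv V r
        = 2 * ((k : ℝ) ^ 2 + 1) / r ^ 3 + (4 * (k : ℝ) / r ^ 3) * Real.cos (I r)
          + (2 * (k : ℝ) ^ 2 / r ^ 3) * Real.sin (I r) ^ 2 ∧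
      2 * ((k : ℝ) - 1) ^ 2 / r ^ 3 ≤ -deriv V r := by
  intro r hr
  obtain ⟨m, rfl⟩ : ∃ m, k = m + 1 := ⟨k - 1, by omega⟩
  have hr0 : r ≠ 0 := ne_of_gt hr
  have hden : (1 : ℝ) + (r ^ (m + 1)) ^ 2 ≠ 0 := by positivity
  -- sin of I r
  have hsin : Real.sin (I r) = 2 * r ^ (m + 1) / (1 + (r ^ (m + 1)) ^ 2) := by
    rw [hI r, Real.sin_two_mul, Real.sin_arctan, Real.cos_arctan, mul_assoc,
      div_mul_div_comm, Real.mul_self_sqrt (by positivity)]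
    ring
  -- function forms
  have hIfun : I = fun s => 2 * Real.arctan (s ^ (m + 1)) := funext hI
  have hVfun : V = fun s => (((m : ℝ) + 1) ^ 2 + 1) / s ^ 2
      + 2 * ((m : ℝ) + 1) * Real.cos (I s) / s ^ 2 := by
    funext s
    rw [hV s]
    push_cast
    ring
  -- derivative of I
  have hpow : HasDerivAt (fun s : ℝ => s ^ (m + 1)) (((m : ℝ) + 1) * r ^ m) r := by
    simpa using hasDerivAt_pow (m + 1) r
  have hDI : HasDerivAt I
      (2 * ((((m : ℝ) + 1) * r ^ m) / (1 + (r ^ (m + 1)) ^ 2))) r := by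
    rw [hIfun]
    have h := hpow.arctan.const_mul 2
    refine h.congr_deriv ?_
    ring
  have hDcos : HasDerivAt (fun s => Real.cos (I s))
      (-Real.sin (I r) * (2 * ((((m : ℝ) + 1) * r ^ m) / (1 + (r ^ (m + 1)) ^ 2)))) r :=
    (Real.hasDerivAt_cos (I r)).comp r hDI
  have h2 : HasDerivAt (fun s : ℝ => s ^ 2) (2 * r) r := by
    simpa using hasDerivAt_pow 2 r
  have hr2 : r ^ 2 ≠ 0 := pow_ne_zero _ hr0
  have hT1 : HasDerivAt (fun s : ℝ => (((m : ℝ) + 1) ^ 2 + 1) / s ^ 2)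
      ((0 * r ^ 2 - (((m : ℝ) + 1) ^ 2 + 1) * (2 * r)) / (r ^ 2) ^ 2) r :=
    (hasDerivAt_const r _).div h2 hr2
  have hT2 : HasDerivAt (fun s : ℝ => 2 * ((m : ℝ) + 1) * Real.cos (I s) / s ^ 2)
      ((2 * ((m : ℝ) + 1) *
          (-Real.sin (I r) * (2 * ((((m : ℝ) + 1) * r ^ m) / (1 + (r ^ (m + 1)) ^ 2)))) * r ^ 2
        - 2 * ((m : ℝ) + 1) * Real.cos (I r) * (2 * r)) / (r ^ 2) ^ 2) r :=
    (hDcos.const_mul (2 * ((m : ℝ) + 1))).div h2 hr2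
  have hDV : HasDerivAt V
      ((0 * r ^ 2 - (((m : ℝ) + 1) ^ 2 + 1) * (2 * r)) / (r ^ 2) ^ 2
        + ((2 * ((m : ℝ) + 1) *
            (-Real.sin (I r) * (2 * ((((m : ℝ) + 1) * r ^ m) / (1 + (r ^ (m + 1)) ^ 2)))) * r ^ 2
          - 2 * ((m : ℝ) + 1) * Real.cos (I r) * (2 * r)) / (r ^ 2) ^ 2)) r := by
    rw [hVfun]; exact hT1.add hT2
  have heq : -deriv V r
      = 2 * (((m : ℕ) + 1 : ℕ) : ℝ) ^ 2 / r ^ 3 + 2 / r ^ 3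
        + 4 * (((m : ℕ) + 1 : ℕ) : ℝ) / r ^ 3 * Real.cos (I r)
        + 2 * (((m : ℕ) + 1 : ℕ) : ℝ) ^ 2 / r ^ 3 * Real.sin (I r) ^ 2 := by
    rw [hDV.deriv, hsin]
    push_cast
    field_simp
    ring
  constructor
  · rw [heq]; push_cast; ring
  · rw [heq]
    have h3 : (0 : ℝ) < r ^ 3 := by positivity
    have hc : -1 ≤ Real.cos (I r) := Real.neg_one_le_cos (I r)
    have hs : 0 ≤ Real.sin (I r) ^ 2 := sq_nonneg _
    push_cast
    have hnum : 2 * ((m : ℝ) + 1 - 1) ^ 2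
        ≤ 2 * ((m : ℝ) + 1) ^ 2 + 2 + 4 * ((m : ℝ) + 1) * Real.cos (I r)
          + 2 * ((m : ℝ) + 1) ^ 2 * Real.sin (I r) ^ 2 := by
      nlinarith [mul_nonneg (show (0:ℝ) ≤ (m : ℝ) + 1 by positivity)
          (show (0:ℝ) ≤ 1 + Real.cos (I r) by linarith),
        mul_nonneg (sq_nonneg ((m : ℝ) + 1)) hs]
    calc 2 * ((m : ℝ) + 1 - 1) ^ 2 / r ^ 3
        ≤ (2 * ((m : ℝ) + 1) ^ 2 + 2 + 4 * ((m : ℝ) + 1) * Real.cos (I r)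
            + 2 * ((m : ℝ) + 1) ^ 2 * Real.sin (I r) ^ 2) / r ^ 3 := by gcongr
      _ = 2 * ((m : ℝ) + 1) ^ 2 / r ^ 3 + 2 / r ^ 3
            + 4 * ((m : ℝ) + 1) / r ^ 3 * Real.cos (I r)
            + 2 * ((m : ℝ) + 1) ^ 2 / r ^ 3 * Real.sin (I r) ^ 2 := by ring
end

section
/- For k ≥ 2 and K(r) = (r²/4)·J(r) with J(r) = k·sin(I(r)), I(r) = 2 arctan(r^k), one has H K = -(J + r·J') where H = -∂_r² - r⁻¹∂_r + (k²/r²)·cos(2I). -/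
open Real Set

/-- For `k ≥ 2` and `K(r) = (r²/4) J(r)`, one has `H K = -(J + r J')`,
where `H ψ = -ψ'' - ψ'/r + (k²/r²) cos(2I) ψ`. -/
theorem HK_eq (k : ℕ) (hk : 2 ≤ k)
    (I J K : ℝ → ℝ) (hI : ∀ r : ℝ, I r = 2 * Real.arctan (r ^ k))
    (hJ : ∀ r : ℝ, J r = (k : ℝ) * Real.sin (I r))
    (hK : ∀ r : ℝ, K r = r ^ 2 / 4 * J r) :
    ∀ r : ℝ, 0 < r →
      -deriv (deriv K) r - deriv K r / r
          + ((k : ℝ) ^ 2 / r ^ 2) * Real.cos (2 * I r) * K r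
        = -(J r + r * deriv J r) := by
  obtain ⟨m, rfl⟩ : ∃ m, k = m + 2 := ⟨k - 2, by omega⟩
  -- closed form for sin (I r)
  have hsin : ∀ r : ℝ, Real.sin (I r)
      = 2 * r ^ (m+2) / (1 + (r ^ (m+2)) ^ 2) := by
    intro r
    have hpos : (0:ℝ) < 1 + (r ^ (m+2)) ^ 2 := by positivity
    have hs : Real.sqrt (1 + (r ^ (m+2)) ^ 2) ≠ 0 := by positivity
    rw [hI, Real.sin_two_mul, Real.sin_arctan, Real.cos_arctan]
    field_simp
    rw [Real.sq_sqrt hpos.le]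
  -- closed form for J
  have hJ' : ∀ r : ℝ, J r
      = 2 * ((m:ℝ)+2) * r ^ (m+2) / (1 + (r ^ (m+2)) ^ 2) := by
    intro r
    rw [hJ, hsin]
    push_cast
    ring
  have hJfun : J = fun r => 2 * ((m:ℝ)+2) * r ^ (m+2) / (1 + (r ^ (m+2)) ^ 2) :=
    funext hJ'
  -- closed form for K
  have hK' : ∀ r : ℝ, K r
      = ((m:ℝ)+2) / 2 * r ^ (m+4) / (1 + (r ^ (m+2)) ^ 2) := by
    intro r
    rw [hK, hJ']
    have : r ^ (m+4) = r ^ 2 * r ^ (m+2) := by ring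
    rw [this]; ring
  have hKfun : K = fun r => ((m:ℝ)+2) / 2 * r ^ (m+4) / (1 + (r ^ (m+2)) ^ 2) :=
    funext hK'
  -- derivative of J
  have hJd : ∀ r : ℝ, HasDerivAt J
      ((2 * ((m:ℝ)+2) * (((m:ℝ)+2) * r ^ (m+1)) * (1 + (r ^ (m+2)) ^ 2)
        - 2 * ((m:ℝ)+2) * r ^ (m+2) * (2 * ((m:ℝ)+2) * r ^ (2*m+3)))
        / (1 + (r ^ (m+2)) ^ 2) ^ 2) r := by
    intro r
    rw [hJfun]
    have hpow : HasDerivAt (fun r : ℝ => r ^ (m+2)) (((m:ℝ)+2) * r ^ (m+1)) r := by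
      simpa using hasDerivAt_pow (m+2) r
    have hden : HasDerivAt (fun r : ℝ => 1 + (r ^ (m+2)) ^ 2)
        (2 * ((m:ℝ)+2) * r ^ (2*m+3)) r := by
      have := (hpow.pow 2).const_add (1:ℝ)
      refine this.congr_deriv ?_
      have : r ^ (2*m+3) = r ^ (m+2) * r ^ (m+1) := by ring
      rw [this]; push_cast; ring
    have hnum : HasDerivAt (fun r : ℝ => 2 * ((m:ℝ)+2) * r ^ (m+2))
        (2 * ((m:ℝ)+2) * (((m:ℝ)+2) * r ^ (m+1))) r := hpow.const_mul _
    exact hnum.div hden (by positivity)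
  -- derivative of K
  have hKd : ∀ r : ℝ, HasDerivAt K
      ((((m:ℝ)+2) / 2 * (((m:ℝ)+4) * r ^ (m+3)) * (1 + (r ^ (m+2)) ^ 2)
        - ((m:ℝ)+2) / 2 * r ^ (m+4) * (2 * ((m:ℝ)+2) * r ^ (2*m+3)))
        / (1 + (r ^ (m+2)) ^ 2) ^ 2) r := by
    intro r
    rw [hKfun]
    have hpow : HasDerivAt (fun r : ℝ => r ^ (m+2)) (((m:ℝ)+2) * r ^ (m+1)) r := by
      simpa using hasDerivAt_pow (m+2) r
    have hden : HasDerivAt (fun r : ℝ => 1 + (r ^ (m+2)) ^ 2)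
        (2 * ((m:ℝ)+2) * r ^ (2*m+3)) r := by
      have := (hpow.pow 2).const_add (1:ℝ)
      refine this.congr_deriv ?_
      have : r ^ (2*m+3) = r ^ (m+2) * r ^ (m+1) := by ring
      rw [this]; push_cast; ring
    have hnum : HasDerivAt (fun r : ℝ => ((m:ℝ)+2) / 2 * r ^ (m+4))
        (((m:ℝ)+2) / 2 * (((m:ℝ)+4) * r ^ (m+3))) r := by
      have := (hasDerivAt_pow (m+4) r).const_mul (((m:ℝ)+2)/2)
      refine this.congr_deriv ?_
      push_cast; ring
    exact hnum.div hden (by positivity)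
  -- simplified form of deriv K
  have hdK : deriv K = fun r =>
      (((m:ℝ)+2) / 2 * (((m:ℝ)+4) * r ^ (m+3) - (m:ℝ) * r ^ (3*m+7)))
        / (1 + (r ^ (m+2)) ^ 2) ^ 2 := by
    funext r
    rw [(hKd r).deriv]
    have hpos : (0:ℝ) < 1 + (r ^ (m+2)) ^ 2 := by positivity
    congr 1
    ring
  -- second derivative of K
  have hKdd : ∀ r : ℝ, HasDerivAt (deriv K)
      (((((m:ℝ)+2) / 2 * (((m:ℝ)+4) * (((m:ℝ)+3) * r ^ (m+2))
            - (m:ℝ) * ((3*(m:ℝ)+7) * r ^ (3*m+6)))) * (1 + (r ^ (m+2)) ^ 2) ^ 2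
        - (((m:ℝ)+2) / 2 * (((m:ℝ)+4) * r ^ (m+3) - (m:ℝ) * r ^ (3*m+7)))
          * (2 * (1 + (r ^ (m+2)) ^ 2) * (2 * ((m:ℝ)+2) * r ^ (2*m+3))))
        / ((1 + (r ^ (m+2)) ^ 2) ^ 2) ^ 2) r := by
    intro r
    rw [hdK]
    have hpow : HasDerivAt (fun r : ℝ => r ^ (m+2)) (((m:ℝ)+2) * r ^ (m+1)) r := by
      simpa using hasDerivAt_pow (m+2) r
    have hden : HasDerivAt (fun r : ℝ => 1 + (r ^ (m+2)) ^ 2)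
        (2 * ((m:ℝ)+2) * r ^ (2*m+3)) r := by
      have := (hpow.pow 2).const_add (1:ℝ)
      refine this.congr_deriv ?_
      have : r ^ (2*m+3) = r ^ (m+2) * r ^ (m+1) := by ring
      rw [this]; push_cast; ring
    have hden2 : HasDerivAt (fun r : ℝ => (1 + (r ^ (m+2)) ^ 2) ^ 2)
        (2 * (1 + (r ^ (m+2)) ^ 2) * (2 * ((m:ℝ)+2) * r ^ (2*m+3))) r := by
      have := hden.pow 2
      refine this.congr_deriv ?_
      push_cast; ring
    have hnum : HasDerivAt
        (fun r : ℝ => ((m:ℝ)+2) / 2 * (((m:ℝ)+4) * r ^ (m+3) - (m:ℝ) * r ^ (3*m+7)))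
        (((m:ℝ)+2) / 2 * (((m:ℝ)+4) * (((m:ℝ)+3) * r ^ (m+2))
          - (m:ℝ) * ((3*(m:ℝ)+7) * r ^ (3*m+6)))) r := by
      have h1 : HasDerivAt (fun r : ℝ => r ^ (m+3)) (((m:ℝ)+3) * r ^ (m+2)) r := by
        have := hasDerivAt_pow (m+3) r
        refine this.congr_deriv ?_; push_cast; ring
      have h2 : HasDerivAt (fun r : ℝ => r ^ (3*m+7)) ((3*(m:ℝ)+7) * r ^ (3*m+6)) r := by
        have := hasDerivAt_pow (3*m+7) r
        refine this.congr_deriv ?_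
        · push_cast; ring
      exact (((h1.const_mul ((m:ℝ)+4)).sub (h2.const_mul (m:ℝ))).const_mul _)
    exact hnum.div hden2 (by positivity)
  -- closed form for cos (2 I r)
  have hcos : ∀ r : ℝ, Real.cos (2 * I r)
      = 1 - 2 * (2 * r ^ (m+2) / (1 + (r ^ (m+2)) ^ 2)) ^ 2 := by
    intro r
    rw [Real.cos_two_mul, Real.cos_sq', hsin]
    ring
  -- final computation
  intro r hr
  rw [(hKdd r).deriv, hdK, (hJd r).deriv, hJ' r, hK' r, hcos r]
  have hpos : (0:ℝ) < 1 + (r ^ (m+2)) ^ 2 := by positivity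
  have hrne : r ≠ 0 := hr.ne'
  field_simp
  push_cast
  ring
end

section
/- For k ≥ 2, the integral ∫₀^∞ J(r)⁴ r dr with J(r) = 2k·r^k/(1+r^{2k}) satisfies the identity ∫₀^∞ J⁴ r dr = (2k²-2)·∫₀^∞ J² r dr - 2·∫₀^∞ J⁴ r dr, i.e. 3∫₀^∞ J⁴ r dr = (2k²-2)∫₀^∞ J² r dr. -/
open Real Set MeasureTheory Filter Topology

private lemma den_pos (k : ℕ) (r : ℝ) : 0 < 1 + r ^ (2 * k) := by
  have h : (0:ℝ) ≤ r ^ (2 * k) := by rw [pow_mul]; positivity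
  linarith

private lemma cont_lem (k p q : ℕ) :
    Continuous (fun r : ℝ => r ^ p / (1 + r ^ (2 * k)) ^ q) :=
  Continuous.div (continuous_pow p)
    ((continuous_const.add (continuous_pow _)).pow q)
    (fun r => pow_ne_zero _ (den_pos k r).ne')

private lemma bound_lem (k p q : ℕ) {r : ℝ} (hr : 1 ≤ r) :
    r ^ p / (1 + r ^ (2 * k)) ^ q ≤ r ^ ((p : ℝ) - 2 * k * q) := by
  have hr0 : (0:ℝ) < r := lt_of_lt_of_le one_pos hr
  have hx : (0:ℝ) ≤ r ^ (2 * k) := by rw [pow_mul]; positivity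
  have h1 : r ^ (2 * k * q) ≤ (1 + r ^ (2 * k)) ^ q := by
    rw [pow_mul]
    exact pow_le_pow_left₀ hx (by linarith) q
  have h2 : r ^ p / (1 + r ^ (2 * k)) ^ q ≤ r ^ p / r ^ (2 * k * q) := by
    gcongr
  refine h2.trans_eq ?_
  rw [← rpow_natCast r p, ← rpow_natCast r (2 * k * q), ← rpow_sub hr0]
  congr 1
  push_cast
  ring

private lemma integ_lem (k p q : ℕ) (h : p + 1 < 2 * k * q) :
    IntegrableOn (fun r : ℝ => r ^ p / (1 + r ^ (2 * k)) ^ q) (Ioi 0) := by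
  have hcont := cont_lem k p q
  have h1 : IntegrableOn (fun r : ℝ => r ^ p / (1 + r ^ (2 * k)) ^ q) (Ioc 0 1) :=
    hcont.continuousOn.integrableOn_compact isCompact_Icc |>.mono_set Ioc_subset_Icc_self
  have hexp : (p : ℝ) - 2 * k * q < -1 := by
    have h' : (p : ℝ) + 1 < 2 * k * q := by exact_mod_cast h
    linarith
  have h2 : IntegrableOn (fun r : ℝ => r ^ p / (1 + r ^ (2 * k)) ^ q) (Ioi 1) := by
    refine Integrable.mono' (integrableOn_Ioi_rpow_of_lt hexp one_pos)
      hcont.aestronglyMeasurable.restrict ?_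
    filter_upwards [ae_restrict_mem measurableSet_Ioi] with r hr
    have hr1 : (1:ℝ) ≤ r := le_of_lt hr
    have hr0 : (0:ℝ) < r := lt_of_lt_of_le one_pos hr1
    rw [Real.norm_eq_abs, abs_of_nonneg (by positivity)]
    exact bound_lem k p q hr1
  have := h1.union h2
  rwa [Ioc_union_Ioi_eq_Ioi zero_le_one] at this

private lemma deriv_helper (k p m : ℕ) (hk : 1 ≤ k) (r : ℝ) :
    HasDerivAt (fun r : ℝ => r ^ (p + 1) / (1 + r ^ (2 * k)) ^ (m + 1))
      (((p:ℝ) + 1) * (r ^ p / (1 + r ^ (2 * k)) ^ (m + 1))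
        - (2 * (k:ℝ) * ((m:ℝ) + 1)) * (r ^ (p + 2 * k) / (1 + r ^ (2 * k)) ^ (m + 2))) r := by
  obtain ⟨s, hs⟩ : ∃ s, 2 * k = s + 1 := ⟨2 * k - 1, by omega⟩
  have hsr : 2 * (k:ℝ) = (s:ℝ) + 1 := by exact_mod_cast congrArg (Nat.cast : ℕ → ℝ) hs
  rw [hs, hsr]
  have hden : (0:ℝ) < 1 + r ^ (s + 1) := by rw [← hs]; exact den_pos k r
  have h1 : HasDerivAt (fun r : ℝ => r ^ (p + 1)) (((p:ℝ) + 1) * r ^ p) r := by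
    simpa using hasDerivAt_pow (p + 1) r
  have hb : HasDerivAt (fun r : ℝ => 1 + r ^ (s + 1)) (((s:ℝ) + 1) * r ^ s) r := by
    simpa using (hasDerivAt_pow (s + 1) r).const_add 1
  have h2 : HasDerivAt (fun r : ℝ => (1 + r ^ (s + 1)) ^ (m + 1))
      (((m:ℝ) + 1) * (1 + r ^ (s + 1)) ^ m * (((s:ℝ) + 1) * r ^ s)) r := by
    simpa using hb.fun_pow (m + 1)
  have hdiv := h1.fun_div h2 (pow_ne_zero _ hden.ne')
  refine hdiv.congr_deriv ?_
  have hDne : (1 + r ^ (s + 1)) ≠ 0 := hden.ne'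
  field_simp
  ring

private lemma ibp_lem (k p q : ℕ) (hk : 1 ≤ k) (hq : 1 ≤ q) (h : p + 1 < 2 * k * q) :
    ((p:ℝ) + 1) * (∫ r in Ioi (0:ℝ), r ^ p / (1 + r ^ (2 * k)) ^ q)
      = 2 * (k:ℝ) * (q:ℝ) * (∫ r in Ioi (0:ℝ), r ^ (p + 2 * k) / (1 + r ^ (2 * k)) ^ (q + 1)) := by
  obtain ⟨m, rfl⟩ : ∃ m, q = m + 1 := ⟨q - 1, by omega⟩
  have i1 : IntegrableOn (fun r : ℝ => r ^ p / (1 + r ^ (2 * k)) ^ (m + 1)) (Ioi 0) :=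
    integ_lem k p (m + 1) h
  have hcond2 : p + 2 * k + 1 < 2 * k * (m + 2) := by
    have e : 2 * k * (m + 2) = 2 * k * (m + 1) + 2 * k := by ring
    rw [e]; linarith
  have i2 : IntegrableOn (fun r : ℝ => r ^ (p + 2 * k) / (1 + r ^ (2 * k)) ^ (m + 2)) (Ioi 0) :=
    integ_lem k (p + 2 * k) (m + 2) hcond2
  have hderiv : ∀ x ∈ Ioi (0:ℝ),
      HasDerivAt (fun r : ℝ => r ^ (p + 1) / (1 + r ^ (2 * k)) ^ (m + 1))
        (((p:ℝ) + 1) * (x ^ p / (1 + x ^ (2 * k)) ^ (m + 1))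
          - (2 * (k:ℝ) * ((m:ℝ) + 1)) * (x ^ (p + 2 * k) / (1 + x ^ (2 * k)) ^ (m + 2))) x :=
    fun x _ => deriv_helper k p m hk x
  have hcont : ContinuousWithinAt
      (fun r : ℝ => r ^ (p + 1) / (1 + r ^ (2 * k)) ^ (m + 1)) (Ici 0) 0 :=
    (cont_lem k (p + 1) (m + 1)).continuousWithinAt
  have ig : IntegrableOn (fun x : ℝ =>
      ((p:ℝ) + 1) * (x ^ p / (1 + x ^ (2 * k)) ^ (m + 1))
        - (2 * (k:ℝ) * ((m:ℝ) + 1)) * (x ^ (p + 2 * k) / (1 + x ^ (2 * k)) ^ (m + 2)))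
      (Ioi 0) := (i1.const_mul _).sub (i2.const_mul _)
  have htop : Tendsto (fun r : ℝ => r ^ (p + 1) / (1 + r ^ (2 * k)) ^ (m + 1)) atTop (𝓝 0) := by
    have hy : (0:ℝ) < 2 * k * (m + 1) - ((p:ℝ) + 1) := by
      have h' : (p : ℝ) + 1 < 2 * k * (m + 1) := by exact_mod_cast h
      linarith
    have ht : Tendsto (fun r : ℝ => r ^ (((p:ℝ) + 1) - 2 * k * (m + 1))) atTop (𝓝 0) := by
      have := tendsto_rpow_neg_atTop hy
      simpa [neg_sub] using this
    refine squeeze_zero' ?_ ?_ ht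
    · filter_upwards [eventually_ge_atTop (1:ℝ)] with r hr
      have hr0 : (0:ℝ) < r := lt_of_lt_of_le one_pos hr
      positivity
    · filter_upwards [eventually_ge_atTop (1:ℝ)] with r hr
      have := bound_lem k (p + 1) (m + 1) hr
      convert this using 2
      push_cast
      ring
  have key := integral_Ioi_of_hasDerivAt_of_tendsto hcont hderiv ig htop
  have hf0 : (0:ℝ) ^ (p + 1) / (1 + (0:ℝ) ^ (2 * k)) ^ (m + 1) = 0 := by
    simp [zero_pow]
  rw [hf0] at key
  rw [integral_sub (i1.const_mul _) (i2.const_mul _),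
    integral_const_mul, integral_const_mul] at key
  have e : m + 1 + 1 = m + 2 := by omega
  rw [e]
  push_cast
  linarith

private lemma split_lem (k p q : ℕ) (h : p + 1 < 2 * k * q) :
    (∫ r in Ioi (0:ℝ), r ^ (p + 2 * k) / (1 + r ^ (2 * k)) ^ (q + 1))
      = (∫ r in Ioi (0:ℝ), r ^ p / (1 + r ^ (2 * k)) ^ q)
        - ∫ r in Ioi (0:ℝ), r ^ p / (1 + r ^ (2 * k)) ^ (q + 1) := by
  have h2 : p + 1 < 2 * k * (q + 1) :=
    lt_of_lt_of_le h (Nat.mul_le_mul_left _ (Nat.le_succ q))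
  rw [← integral_sub (integ_lem k p q h) (integ_lem k p (q + 1) h2)]
  congr 1
  funext r
  have hden := den_pos k r
  have hDne : (1 + r ^ (2 * k)) ≠ 0 := hden.ne'
  field_simp
  ring

/-- For `k ≥ 2`, with `J(r) = 2k r^k/(1+r^(2k))`:
`∫ J⁴ r dr = (2k²-2) ∫ J² r dr - 2 ∫ J⁴ r dr`, i.e. `3 ∫ J⁴ r dr = (2k²-2) ∫ J² r dr`. -/
theorem J4_integral_identity (k : ℕ) (hk : 2 ≤ k)
    (J : ℝ → ℝ) (hJ : ∀ r : ℝ, J r = 2 * k * r ^ k / (1 + r ^ (2 * k))) :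
    (∫ r in Set.Ioi (0:ℝ), (J r) ^ 4 * r)
      = (2 * (k : ℝ) ^ 2 - 2) * (∫ r in Set.Ioi (0:ℝ), (J r) ^ 2 * r)
        - 2 * (∫ r in Set.Ioi (0:ℝ), (J r) ^ 4 * r) ∧
    3 * (∫ r in Set.Ioi (0:ℝ), (J r) ^ 4 * r)
      = (2 * (k : ℝ) ^ 2 - 2) * (∫ r in Set.Ioi (0:ℝ), (J r) ^ 2 * r) := by
  have hk1 : 1 ≤ k := by omega
  have hJ2 : (∫ r in Set.Ioi (0:ℝ), (J r) ^ 2 * r)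
      = 4 * (k:ℝ) ^ 2 * ∫ r in Ioi (0:ℝ), r ^ (2 * k + 1) / (1 + r ^ (2 * k)) ^ 2 := by
    rw [← integral_const_mul]
    congr 1
    funext r
    rw [hJ r]
    have hden := den_pos k r
    have hDne : (1 + r ^ (2 * k)) ≠ 0 := hden.ne'
    field_simp
    ring
  have hJ4 : (∫ r in Set.Ioi (0:ℝ), (J r) ^ 4 * r)
      = 16 * (k:ℝ) ^ 4 * ∫ r in Ioi (0:ℝ), r ^ (4 * k + 1) / (1 + r ^ (2 * k)) ^ 4 := by
    rw [← integral_const_mul]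
    congr 1
    funext r
    rw [hJ r]
    have hden := den_pos k r
    have hDne : (1 + r ^ (2 * k)) ≠ 0 := hden.ne'
    field_simp
    ring
  have e1 := ibp_lem k 1 1 hk1 le_rfl (by omega)
  have e2 := ibp_lem k 1 2 hk1 (by omega) (by omega)
  have e3 := split_lem k 1 1 (by omega)
  have e4 := ibp_lem k (2 * k + 1) 3 hk1 (by omega) (by omega)
  have hi1 : 1 + 2 * k = 2 * k + 1 := by omega
  have hi2 : 2 * k + 1 + 2 * k = 4 * k + 1 := by omega
  rw [hi1] at e1 e2 e3
  rw [hi2] at e4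
  norm_num at e1 e2 e3 e4
  push_cast at e1 e2 e4
  set K : ℝ := (k : ℝ) with hK
  set A := ∫ r in Ioi (0:ℝ), r ^ (2 * k + 1) / (1 + r ^ (2 * k)) ^ 2 with hA
  set B := ∫ r in Ioi (0:ℝ), r ^ (2 * k + 1) / (1 + r ^ (2 * k)) ^ 3 with hB
  set C := ∫ r in Ioi (0:ℝ), r ^ (4 * k + 1) / (1 + r ^ (2 * k)) ^ 4 with hC
  set D1 := ∫ r in Ioi (0:ℝ), r ^ 1 / (1 + r ^ (2 * k)) ^ 1 with hD1
  set D2 := ∫ r in Ioi (0:ℝ), r ^ 1 / (1 + r ^ (2 * k)) ^ 2 with hD2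
  have hAB : 2 * K * B = (K - 1) * A := by
    linear_combination (1/2) * e1 - (1/2) * e2 + e3
  have hCA : 48 * K ^ 4 * C = 8 * K ^ 2 * (K ^ 2 - 1) * A := by
    linear_combination (-8 * K ^ 3) * e4 + 8 * K ^ 2 * (K + 1) * hAB
  rw [hJ2, hJ4]
  constructor
  · linear_combination hCA
  · linear_combination hCA
end
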